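/- For every positive integer n and every p > 0, the function g̃_n(x) = n·x^{n−1}/(x^n + i) satisfies ∫_{−1}^{1} |g̃_n(x)|^p dx = 2n^{p−1} ∫_0^1 (t^{1−1/n})^{p−1} (t² + 1)^{−p/2} dt ≤ C̃_p · n^{p−1}, where C̃_p = ∫_0^1 2 t^{κ} (t²+1)^{−p/2} dt and κ = min{p−1, 0}. -/

import Mathlib

open Real intervalIntegral

open MeasureTheory Set in
theorem stmt13 (n : ℕ) (hn : 0 < n) (p : ℝ) (hp : 0 < p) :
    (∫ x in (-1 : ℝ)..1,
        ‖(n : ℂ) * (x : ℂ) ^ (n - 1) / ((x : ℂ) ^ n + Complex.I)‖ ^ p) =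
      2 * (n : ℝ) ^ (p - 1) *
        ∫ t in (0 : ℝ)..1, (t ^ (1 - 1 / (n : ℝ))) ^ (p - 1) * (t ^ 2 + 1) ^ (-p / 2) ∧
    (∫ x in (-1 : ℝ)..1,
        ‖(n : ℂ) * (x : ℂ) ^ (n - 1) / ((x : ℂ) ^ n + Complex.I)‖ ^ p) ≤
      (∫ t in (0 : ℝ)..1, 2 * t ^ min (p - 1) 0 * (t ^ 2 + 1) ^ (-p / 2)) *
        (n : ℝ) ^ (p - 1) := by
  have hn1 : (1:ℝ) ≤ (n:ℝ) := by exact_mod_cast hn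
  have hn0 : (0:ℝ) < (n:ℝ) := by positivity
  set a : ℝ := 1 - 1/(n:ℝ) with ha
  have ha0 : 0 ≤ a := by
    have h : 1/(n:ℝ) ≤ 1 := by rw [div_le_one hn0]; exact hn1
    simp only [ha]; linarith
  have ha1 : a ≤ 1 := by
    have h : 0 ≤ 1/(n:ℝ) := by positivity
    simp only [ha]; linarith
  have hna : (n:ℝ) * a = (n:ℝ) - 1 := by
    rw [ha, mul_sub, mul_one, mul_one_div_cancel hn0.ne']
  have hcast : ((n - 1 : ℕ) : ℝ) = (n:ℝ) - 1 := by
    rw [Nat.cast_sub hn]; norm_num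
  have hexp : min (p-1) 0 ≤ a*(p-1) := by
    rcases le_total p 1 with h | h
    · rw [min_eq_left (by linarith)]
      nlinarith [mul_nonneg (sub_nonneg.2 ha1) (sub_nonneg.2 h)]
    · rw [min_eq_right (by linarith)]
      exact mul_nonneg ha0 (by linarith)
  -- |·| formula
  have habs : ∀ x : ℝ, ‖(n:ℂ) * (x:ℂ)^(n-1) / ((x:ℂ)^n + Complex.I)‖
      = (n:ℝ) * |x|^(n-1) / Real.sqrt (x^(2*n)+1) := by
    intro x
    rw [norm_div, norm_mul, norm_pow, Complex.norm_natCast, Complex.norm_real, Real.norm_eq_abs]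
    congr 1
    rw [show ((x:ℂ)^n) = ((x^n : ℝ) : ℂ) by push_cast; ring]
    rw [Complex.norm_def, Complex.normSq_apply]
    simp only [Complex.add_re, Complex.ofReal_re, Complex.I_re, add_zero,
      Complex.add_im, Complex.ofReal_im, Complex.I_im, zero_add]
    congr 1
    rw [show x^(2*n) = x^n * x^n by rw [two_mul, pow_add]]
    ring
  set G : ℝ → ℝ := fun x => ((n:ℝ) * |x|^(n-1) / Real.sqrt (x^(2*n)+1)) ^ p with hG
  have hGeq : (∫ x in (-1:ℝ)..1,
      ‖(n:ℂ) * (x:ℂ)^(n-1) / ((x:ℂ)^n + Complex.I)‖ ^ p)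
      = ∫ x in (-1:ℝ)..1, G x :=
    integral_congr fun x _ => by rw [hG]; simp only [habs x]
  have hGcont : Continuous G := by
    have hden : Continuous fun x : ℝ => Real.sqrt (x^(2*n)+1) := by fun_prop
    refine Continuous.rpow_const
      (Continuous.div (by fun_prop) hden fun x => ?_) fun x => Or.inr hp.le
    show Real.sqrt (x^(2*n)+1) ≠ 0
    exact ne_of_gt (Real.sqrt_pos.mpr (by rw [pow_mul]; positivity))
  have heven : ∀ x, G (-x) = G x := by
    intro x
    simp only [hG, abs_neg, (even_two_mul n).neg_pow]
  have hGint : ∀ c d : ℝ, IntervalIntegrable G volume c d :=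
    fun c d => hGcont.intervalIntegrable c d
  have hsplit : ∫ x in (-1:ℝ)..1, G x = 2 * ∫ x in (0:ℝ)..1, G x := by
    have h1 : ∫ x in (-1:ℝ)..0, G x = ∫ x in (0:ℝ)..1, G x := by
      have h2 := intervalIntegral.integral_comp_neg (a := 0) (b := 1) G
      simp only [neg_zero] at h2
      rw [← h2]
      exact integral_congr fun x _ => heven x
    rw [← integral_add_adjacent_intervals (hGint (-1) 0) (hGint 0 1), h1, two_mul]
  set g : ℝ → ℝ := fun t => (t ^ a)^(p-1) * (t^2+1)^(-p/2) with hg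
  -- key pointwise identity
  have key : ∀ x : ℝ, 0 < x → G x = (n:ℝ)^(p-1) * (((n:ℝ) * x^(n-1)) * g (x^n)) := by
    intro x hx
    have hS : (0:ℝ) ≤ x^(2*n)+1 := by rw [pow_mul]; positivity
    have e1 : ((x:ℝ)^(n-1) : ℝ) = x ^ ((n:ℝ)-1) := by
      rw [← Real.rpow_natCast x (n-1), hcast]
    have e3 : g (x^n) = x ^ (((n:ℝ)-1)*(p-1)) * (x^(2*n)+1) ^ (-p/2) := by
      rw [hg]
      simp only
      rw [show ((x^n:ℝ))^2 = x^(2*n) by rw [← pow_mul, mul_comm]]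
      rw [← Real.rpow_natCast x n, ← Real.rpow_mul hx.le, hna,
        ← Real.rpow_mul hx.le]
    have hlhs : G x = (n:ℝ)^p * x ^ (((n:ℝ)-1)*p) * (x^(2*n)+1) ^ (-p/2) := by
      rw [hG]
      simp only
      rw [abs_of_pos hx, Real.sqrt_eq_rpow,
        Real.div_rpow (by positivity) (by positivity),
        Real.mul_rpow (by positivity) (by positivity),
        e1, ← Real.rpow_mul hx.le, ← Real.rpow_mul hS,
        div_eq_mul_inv, ← Real.rpow_neg hS, mul_assoc]
      rw [show -(1/2*p) = -p/2 by ring]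
      ring
    have hnn : (n:ℝ)^(p-1) * (n:ℝ) = (n:ℝ)^p := by
      nth_rewrite 2 [← Real.rpow_one (n:ℝ)]
      rw [← Real.rpow_add hn0]; norm_num
    have hxx : x ^ ((n:ℝ)-1) * x ^ (((n:ℝ)-1)*(p-1)) = x ^ (((n:ℝ)-1)*p) := by
      rw [← Real.rpow_add hx]; congr 1; ring
    rw [hlhs, e3, e1,
      show (n:ℝ)^(p-1) * (((n:ℝ) * x^((n:ℝ)-1)) * (x^(((n:ℝ)-1)*(p-1)) * (x^(2*n)+1)^(-p/2)))
        = ((n:ℝ)^(p-1)*(n:ℝ)) * (x^((n:ℝ)-1) * x^(((n:ℝ)-1)*(p-1))) * (x^(2*n)+1)^(-p/2)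
        from by ring,
      hnn, hxx]
  -- integrability facts
  have hmin : -1 < min (p-1) 0 := lt_min (by linarith) (by norm_num)
  have hm_int : IntervalIntegrable (fun t : ℝ => t ^ min (p-1) 0) volume 0 1 :=
    intervalIntegral.intervalIntegrable_rpow' hmin
  have hgmeas : Measurable g := by
    rw [hg]; fun_prop
  have hc0 : ∀ t : ℝ, (0:ℝ) ≤ (t^2+1) ^ (-p/2) := fun t => by positivity
  have hc1 : ∀ t : ℝ, (t^2+1 : ℝ) ^ (-p/2) ≤ 1 := fun t =>
    Real.rpow_le_one_of_one_le_of_nonpos (by nlinarith [sq_nonneg t]) (by linarith)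
  have hgle : ∀ t : ℝ, t ∈ Ioc (0:ℝ) 1 → g t ≤ t ^ min (p-1) 0 := by
    intro t ht
    have h1 : (t ^ a)^(p-1) = t ^ (a*(p-1)) := by
      rw [← Real.rpow_mul ht.1.le]
    have h2 : t ^ (a*(p-1)) ≤ t ^ min (p-1) 0 :=
      Real.rpow_le_rpow_of_exponent_ge ht.1 ht.2 hexp
    calc g t = t ^ (a*(p-1)) * (t^2+1) ^ (-p/2) := by rw [hg]; simp only [h1]
    _ ≤ t ^ min (p-1) 0 * 1 :=
        mul_le_mul h2 (hc1 t) (hc0 t) (Real.rpow_nonneg ht.1.le _)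
    _ = t ^ min (p-1) 0 := mul_one _
  have hg0 : ∀ t : ℝ, 0 ≤ t → 0 ≤ g t := fun t ht =>
    mul_nonneg (Real.rpow_nonneg (Real.rpow_nonneg ht _) _) (hc0 t)
  have hg_int : IntervalIntegrable g volume 0 1 := by
    apply hm_int.mono_fun hgmeas.aestronglyMeasurable
    filter_upwards [ae_restrict_mem measurableSet_uIoc] with t ht
    rw [uIoc_of_le zero_le_one] at ht
    rw [Real.norm_eq_abs, Real.norm_eq_abs, abs_of_nonneg (hg0 t ht.1.le),
      abs_of_nonneg (Real.rpow_nonneg ht.1.le _)]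
    exact hgle t ht
  have hgcont : ContinuousOn g (Ioi (0:ℝ)) := by
    apply ContinuousOn.mul
    · apply ContinuousOn.rpow_const
      · exact (continuousOn_id).rpow_const (fun t ht => Or.inl (ne_of_gt ht))
      · intro t ht
        exact Or.inl (ne_of_gt (Real.rpow_pos_of_pos ht _))
    · apply ContinuousOn.rpow_const
      · fun_prop
      · intro t _; left; positivity
  have hne : ∀ᵐ x : ℝ ∂volume, x ≠ 0 := by
    filter_upwards [MeasureTheory.compl_mem_ae_iff.mpr Real.volume_singleton] with x hx
    simpa using hx
  -- substitution u = x^n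
  have hsub : (∫ x in (0:ℝ)..1, ((n:ℝ) * x^(n-1)) • g (x^n)) = ∫ t in (0:ℝ)..1, g t := by
    have hres := intervalIntegral.integral_comp_smul_deriv''' (a := (0:ℝ)) (b := 1)
      (f := fun x : ℝ => x^n) (f' := fun x => (n:ℝ) * x^(n-1)) (g := g)
      (by fun_prop)
      (fun x hx => (hasDerivAt_pow n x).hasDerivWithinAt)
      ?_ ?_ ?_
    · simpa [zero_pow hn.ne'] using hres
    · apply hgcont.mono
      rintro t ⟨x, hx, rfl⟩
      rw [min_eq_left zero_le_one, max_eq_right zero_le_one] at hx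
      exact pow_pos hx.1 n
    · have himg : (fun x : ℝ => x^n) '' (Set.uIcc (0:ℝ) 1) ⊆ Icc 0 1 := by
        rintro t ⟨x, hx, rfl⟩
        rw [uIcc_of_le zero_le_one] at hx
        exact ⟨pow_nonneg hx.1 n, pow_le_one₀ hx.1 hx.2⟩
      have h1 : IntegrableOn g (Icc (0:ℝ) 1) volume := by
        have := (intervalIntegrable_iff' (h := enorm_ne_top)).mp hg_int
        rwa [uIcc_of_le zero_le_one] at this
      exact h1.mono_set himg
    · have hφ : IntegrableOn (fun x : ℝ => (n:ℝ)^((1:ℝ)-p) * G x) (Set.uIcc (0:ℝ) 1) volume := by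
        rw [uIcc_of_le zero_le_one]
        exact (continuous_const.mul hGcont).integrableOn_Icc
      apply hφ.congr_fun_ae
      rw [uIcc_of_le zero_le_one]
      filter_upwards [ae_restrict_mem measurableSet_Icc, ae_restrict_of_ae hne] with x hx hx0
      have hxpos : 0 < x := lt_of_le_of_ne hx.1 (Ne.symm hx0)
      have hk := key x hxpos
      have hninv : (n:ℝ)^((1:ℝ)-p) * (n:ℝ)^(p-1) = 1 := by
        rw [← Real.rpow_add hn0]; norm_num
      simp only [Function.comp_apply, smul_eq_mul]
      rw [hk, ← mul_assoc, hninv, one_mul]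
  have hG01 : ∫ x in (0:ℝ)..1, G x = (n:ℝ)^(p-1) * ∫ t in (0:ℝ)..1, g t := by
    rw [← hsub, ← intervalIntegral.integral_const_mul]
    apply intervalIntegral.integral_congr_ae
    filter_upwards with x hx
    rw [uIoc_of_le zero_le_one] at hx
    rw [key x hx.1, smul_eq_mul]
  have hmain : (∫ x in (-1:ℝ)..1,
      ‖(n:ℂ) * (x:ℂ)^(n-1) / ((x:ℂ)^n + Complex.I)‖ ^ p)
      = 2 * (n:ℝ)^(p-1) * ∫ t in (0:ℝ)..1, g t := by
    rw [hGeq, hsplit, hG01]; ring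
  -- the majorant integral
  have hM_int : IntervalIntegrable (fun t : ℝ => t ^ min (p-1) 0 * (t^2+1)^(-p/2)) volume 0 1 := by
    apply hm_int.mono_fun
    · exact (by fun_prop : Measurable fun t : ℝ => t ^ min (p-1) 0 * (t^2+1)^(-p/2)).aestronglyMeasurable
    · filter_upwards [ae_restrict_mem measurableSet_uIoc] with t ht
      rw [uIoc_of_le zero_le_one] at ht
      have hmn : (0:ℝ) ≤ t ^ min (p-1) 0 := Real.rpow_nonneg ht.1.le _
      rw [Real.norm_eq_abs, Real.norm_eq_abs, abs_of_nonneg (mul_nonneg hmn (hc0 t)),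
        abs_of_nonneg hmn]
      exact mul_le_of_le_one_right hmn (hc1 t)
  have hle2 : (∫ t in (0:ℝ)..1, g t)
      ≤ ∫ t in (0:ℝ)..1, t ^ min (p-1) 0 * (t^2+1)^(-p/2) := by
    apply integral_mono_ae_restrict zero_le_one hg_int hM_int
    filter_upwards [ae_restrict_mem measurableSet_Icc, ae_restrict_of_ae hne] with t ht ht0
    have htpos : 0 < t := lt_of_le_of_ne ht.1 (Ne.symm ht0)
    have h1 : (t ^ a)^(p-1) = t ^ (a*(p-1)) := by
      rw [← Real.rpow_mul htpos.le]
    calc g t = t ^ (a*(p-1)) * (t^2+1) ^ (-p/2) := by rw [hg]; simp only [h1]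
    _ ≤ t ^ min (p-1) 0 * (t^2+1) ^ (-p/2) :=
        mul_le_mul_of_nonneg_right
          (Real.rpow_le_rpow_of_exponent_ge htpos ht.2 hexp) (hc0 t)
  have hrhs : (∫ t in (0:ℝ)..1, 2 * t ^ min (p-1) 0 * (t^2+1)^(-p/2))
      = 2 * ∫ t in (0:ℝ)..1, t ^ min (p-1) 0 * (t^2+1)^(-p/2) := by
    rw [← intervalIntegral.integral_const_mul]
    exact integral_congr fun t _ => by ring
  constructor
  · exact hmain
  · rw [hmain, hrhs]
    have hnp : (0:ℝ) ≤ (n:ℝ)^(p-1) := Real.rpow_nonneg hn0.le _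
    calc 2 * (n:ℝ)^(p-1) * ∫ t in (0:ℝ)..1, g t
        = (2 * (n:ℝ)^(p-1)) * ∫ t in (0:ℝ)..1, g t := by ring
    _ ≤ (2 * (n:ℝ)^(p-1)) * ∫ t in (0:ℝ)..1, t ^ min (p-1) 0 * (t^2+1)^(-p/2) := by
        apply mul_le_mul_of_nonneg_left hle2 (by positivity)
    _ = 2 * (∫ t in (0:ℝ)..1, t ^ min (p-1) 0 * (t^2+1)^(-p/2)) * (n:ℝ)^(p-1) := by ring
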